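/- Let φ : ℝ → ℝ be continuously differentiable with φ(v) > 0 and φ'(v) < 0 for all v ∈ ℝ. Define g(v) = φ'(v)/φ'(−v) and assume that the restriction of g to (0,∞) is a strictly decreasing bijection from (0,∞) onto (0,1). Then for every a ∈ (0,1), the function f_a(v) = a·φ(v) + (1−a)·φ(−v) has exactly one critical point v* ∈ ℝ; moreover f_a'(v) < 0 for v < v* and f_a'(v) > 0 for v > v*, so f_a attains its strict global minimum over ℝ at v*. -/

import Mathlib

/-- If φ is C¹, positive, with strictly negative derivative, and
g(v) = φ'(v)/φ'(−v) restricted to (0,∞) is a strictly decreasing bijection onto (0,1),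
then for every a ∈ (0,1) the combination f_a(v) = a·φ(v) + (1−a)·φ(−v) has exactly one
critical point v*, with f_a' < 0 left of v*, f_a' > 0 right of v*, and a strict global
minimum at v*. -/
theorem stmt2 (φ : ℝ → ℝ) (hC1 : ContDiff ℝ 1 φ)
    (hpos : ∀ v : ℝ, 0 < φ v) (hder : ∀ v : ℝ, deriv φ v < 0)
    (hanti : StrictAntiOn (fun v => deriv φ v / deriv φ (-v)) (Set.Ioi (0:ℝ)))
    (hbij : Set.BijOn (fun v => deriv φ v / deriv φ (-v)) (Set.Ioi (0:ℝ)) (Set.Ioo (0:ℝ) 1))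
    (a : ℝ) (ha : a ∈ Set.Ioo (0:ℝ) 1) :
    ∃ vstar : ℝ,
      deriv (fun v => a * φ v + (1 - a) * φ (-v)) vstar = 0 ∧
      (∀ v : ℝ, deriv (fun v => a * φ v + (1 - a) * φ (-v)) v = 0 → v = vstar) ∧
      (∀ v : ℝ, v < vstar → deriv (fun v => a * φ v + (1 - a) * φ (-v)) v < 0) ∧
      (∀ v : ℝ, vstar < v → 0 < deriv (fun v => a * φ v + (1 - a) * φ (-v)) v) ∧
      (∀ v : ℝ, v ≠ vstar →
        a * φ vstar + (1 - a) * φ (-vstar) < a * φ v + (1 - a) * φ (-v)) := by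
  obtain ⟨ha0, ha1⟩ := ha
  have hdiff : Differentiable ℝ φ := hC1.differentiable one_ne_zero
  set g : ℝ → ℝ := fun v => deriv φ v / deriv φ (-v) with hgdef
  set F : ℝ → ℝ := fun v => a * φ v + (1 - a) * φ (-v) with hFdef
  have hne : ∀ v : ℝ, deriv φ v ≠ 0 := fun v => (hder v).ne
  have hFd : ∀ v, HasDerivAt F (a * deriv φ v - (1 - a) * deriv φ (-v)) v := by
    intro v
    have h1 : HasDerivAt φ (deriv φ v) v := (hdiff v).hasDerivAt
    have h2 : HasDerivAt (fun w : ℝ => φ (-w)) (deriv φ (-v) * (-1)) v :=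
      ((hdiff (-v)).hasDerivAt).comp v (hasDerivAt_neg v)
    have h3 := (h1.const_mul a).add (h2.const_mul (1 - a))
    exact h3.congr_deriv (by ring)
  have hderivF : ∀ v, deriv F v = a * deriv φ v - (1 - a) * deriv φ (-v) :=
    fun v => (hFd v).deriv
  have key : ∀ v, deriv F v = deriv φ (-v) * (a * g v - (1 - a)) := by
    intro v
    rw [hderivF v]
    have h0 := hne (-v)
    simp only [hgdef]
    field_simp
  set r : ℝ := (1 - a) / a with hrdef
  have hr0 : 0 < r := div_pos (by linarith) ha0
  -- sign lemmas
  have sign_lt : ∀ v, r < g v → deriv F v < 0 := by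
    intro v hv
    rw [key v]
    have h1 : 1 - a < g v * a := (div_lt_iff₀ ha0).1 hv
    have h2 : 0 < a * g v - (1 - a) := by nlinarith
    exact mul_neg_of_neg_of_pos (hder (-v)) h2
  have sign_gt : ∀ v, g v < r → 0 < deriv F v := by
    intro v hv
    rw [key v]
    have h1 : g v * a < 1 - a := (lt_div_iff₀ ha0).1 hv
    have h2 : a * g v - (1 - a) < 0 := by nlinarith
    exact mul_pos_of_neg_of_neg (hder (-v)) h2
  have sign_eq : ∀ v, g v = r → deriv F v = 0 := by
    intro v hv
    rw [key v, hv, hrdef]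
    field_simp
    ring
  have eq_of_deriv0 : ∀ v, deriv F v = 0 → g v = r := by
    intro v hv
    rw [key v] at hv
    rcases mul_eq_zero.1 hv with h | h
    · exact absurd h (hne (-v))
    · have : a * g v = 1 - a := by linarith
      rw [hrdef]
      field_simp
      linarith
  -- g facts
  have ginv : ∀ v : ℝ, g v = (g (-v))⁻¹ := by
    intro v
    simp only [hgdef, neg_neg, inv_div]
  have gmem : ∀ v : ℝ, 0 < v → g v ∈ Set.Ioo (0:ℝ) 1 := fun v hv => hbij.mapsTo hv
  have g0 : g 0 = 1 := by
    simp only [hgdef, neg_zero]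
    exact div_self (hne 0)
  have gbig : ∀ v : ℝ, v < 0 → 1 < g v := by
    intro v hv
    rw [ginv v]
    have hm := gmem (-v) (by linarith)
    exact (one_lt_inv₀ hm.1).2 hm.2
  have gStrictAnti : StrictAnti g := by
    intro x y hxy
    rcases lt_trichotomy x 0 with hx | hx | hx
    · rcases lt_trichotomy y 0 with hy | hy | hy
      · have hx' : (0:ℝ) < -x := by linarith
        have hy' : (0:ℝ) < -y := by linarith
        have h := hanti (Set.mem_Ioi.2 hy') (Set.mem_Ioi.2 hx') (by linarith)
        rw [ginv x, ginv y]
        exact inv_strictAnti₀ (gmem (-x) hx').1 h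
      · rw [hy, g0]; exact gbig x hx
      · exact lt_trans (gmem y hy).2 (gbig x hx)
    · subst hx
      rw [g0]
      exact (gmem y hxy).2
    · exact hanti (Set.mem_Ioi.2 hx) (Set.mem_Ioi.2 (lt_trans hx hxy)) hxy
  -- existence of vstar
  have hexists : ∃ vstar : ℝ, g vstar = r := by
    rcases lt_trichotomy r 1 with hr | hr | hr
    · obtain ⟨w, _, hw⟩ := hbij.surjOn (Set.mem_Ioo.2 ⟨hr0, hr⟩)
      exact ⟨w, hw⟩
    · exact ⟨0, by rw [g0, hr]⟩
    · have hrinv : r⁻¹ ∈ Set.Ioo (0:ℝ) 1 :=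
        ⟨inv_pos.2 hr0, inv_lt_one_of_one_lt₀ hr⟩
      obtain ⟨w, _, hw⟩ := hbij.surjOn hrinv
      refine ⟨-w, ?_⟩
      rw [ginv (-w), neg_neg]
      show (g w)⁻¹ = r
      rw [hw, inv_inv]
  obtain ⟨vstar, hgv⟩ := hexists
  have hFdiff : Differentiable ℝ F := fun v => (hFd v).differentiableAt
  have left : ∀ v, v < vstar → deriv F v < 0 := by
    intro v hv
    exact sign_lt v (hgv ▸ gStrictAnti hv)
  have right : ∀ v, vstar < v → 0 < deriv F v := by
    intro v hv
    exact sign_gt v (hgv ▸ gStrictAnti hv)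
  refine ⟨vstar, sign_eq vstar hgv, ?_, left, right, ?_⟩
  · intro v hv
    exact gStrictAnti.injective ((eq_of_deriv0 v hv).trans hgv.symm)
  · intro v hv
    rcases hv.lt_or_gt with h | h
    · have anti : StrictAntiOn F (Set.Iic vstar) :=
        strictAntiOn_of_deriv_neg (convex_Iic _) hFdiff.continuous.continuousOn
          (by intro x hx; rw [interior_Iic] at hx; exact left x hx)
      exact anti (Set.mem_Iic.2 h.le) (Set.mem_Iic.2 le_rfl) h
    · have mono : StrictMonoOn F (Set.Ici vstar) :=
        strictMonoOn_of_deriv_pos (convex_Ici _) hFdiff.continuous.continuousOn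
          (by intro x hx; rw [interior_Ici] at hx; exact right x hx)
      exact mono (Set.mem_Ici.2 le_rfl) (Set.mem_Ici.2 h.le) h
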